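/- Let X be a compact metric space with a continuous flow φ_s, and let J : X → ℝ be continuous and strictly decreasing along non-constant flow lines. Suppose a < b are regular values (J^{-1}({a,b}) contains no rest points, and every flow line starting in J^{-1}(b) reaches J^{-1}(a) in finite time) and J^{-1}([a,b]) contains no rest points of the flow. Then there is a reparametrized function J̃ : J^{-1}([a,b]) → ℝ with the same level-set topology, agreeing with prescribed values, whose flow lines coincide with those of φ; in particular J^{-1}(b) and J^{-1}(a) are homeomorphic via the flow. -/
import Mathlib

noncomputable section

/-- Milnor-style reparametrization: if `J` is strictly decreasing along the (non-rest)
flow lines of `φ`, the band `J⁻¹([a,b])` contains no rest points, and every point of the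
level `b` flows down to the level `a` in finite time, then there is a reparametrized
function `J'` with the prescribed values `b` and `a` on the two levels, still strictly
decreasing along the flow lines of `φ` inside the band (so its flow lines coincide with
those of `φ` and the level-set topology is unchanged); in particular the two levels
`J⁻¹(b)` and `J⁻¹(a)` are homeomorphic via the flow. -/
theorem stmt12 (X : Type) [MetricSpace X] [CompactSpace X]
    (φ : Flow ℝ X) (J : X → ℝ) (hJ : Continuous J)
    (hdec : ∀ x : X, ¬(∀ t, φ t x = x) → StrictAnti fun t => J (φ t x))
    (a b : ℝ) (hab : a < b)
    (hnorest : ∀ x, J x ∈ Set.Icc a b → ¬(∀ t, φ t x = x))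
    (hreach : ∀ x, J x = b → ∃ t ≥ (0:ℝ), J (φ t x) = a) :
    (∃ J' : X → ℝ, Continuous J' ∧
        (∀ x, J x = b → J' x = b) ∧ (∀ x, J x = a → J' x = a) ∧
        (∀ (x : X) (s t : ℝ), s < t → J (φ s x) ∈ Set.Icc a b →
          J (φ t x) ∈ Set.Icc a b → J' (φ t x) < J' (φ s x))) ∧
      ∃ h : {x : X // J x = b} ≃ₜ {x : X // J x = a},
        ∀ x : {x : X // J x = b}, ∃ t ≥ (0:ℝ), ((h x : X) = φ t (x : X)) := by
  -- strict antitonicity on the band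
  have hsa : ∀ x : X, J x ∈ Set.Icc a b → StrictAnti fun t => J (φ t x) :=
    fun x hx => hdec x (hnorest x hx)
  constructor
  · -- J itself works
    refine ⟨J, hJ, fun _ h => h, fun _ h => h, ?_⟩
    intro x s t hst hs ht
    have hA : StrictAnti fun u => J (φ u (φ s x)) := hsa (φ s x) hs
    have := hA (show (0:ℝ) < t - s by linarith)
    simpa [← Flow.map_add, Flow.map_zero_apply] using this
  · -- the homeomorphism
    -- surjectivity: every point of level a is reached backwards
    have hback : ∀ y : X, J y = a → ∃ s ≤ (0:ℝ), J (φ s y) = b := by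
      intro y hy
      have hymem : J y ∈ Set.Icc a b := by rw [hy]; exact ⟨le_refl _, hab.le⟩
      have hanti : StrictAnti fun t => J (φ t y) := hsa y hymem
      set g : ℝ → ℝ := fun s => J (φ (-s) y) with hg
      have hgmono : Monotone g := fun s t hst => (hanti.antitone (by linarith))
      have hg0 : g 0 = a := by simp [hg, Flow.map_zero_apply, hy]
      -- first find s₀ ≥ 0 with g s₀ ≥ b
      by_cases hbig : ∃ s₀ ≥ (0:ℝ), b ≤ g s₀
      · obtain ⟨s₀, hs₀, hbs₀⟩ := hbig
        have hcont : ContinuousOn g (Set.Icc 0 s₀) :=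
          (hJ.comp (φ.continuous continuous_neg continuous_const)).continuousOn
        have : b ∈ Set.Icc (g 0) (g s₀) := ⟨by rw [hg0]; exact hab.le, hbs₀⟩
        obtain ⟨s, hs, hgs⟩ := intermediate_value_Icc hs₀ hcont this
        exact ⟨-s, by linarith [hs.1], by simpa [hg] using hgs⟩
      · exfalso
        push_neg at hbig
        have hub : ∀ s, g s ≤ b := by
          intro s
          rcases le_or_gt 0 s with h | h
          · exact (hbig s h).le
          · calc g s ≤ g 0 := hgmono h.le
              _ ≤ b := by rw [hg0]; exact hab.le
        have hbdd : BddAbove (Set.range g) := ⟨b, by rintro _ ⟨s, rfl⟩; exact hub s⟩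
        set c : ℝ := ⨆ s, g s with hc
        have hgc : Filter.Tendsto g Filter.atTop (nhds c) :=
          tendsto_atTop_ciSup hgmono hbdd
        -- compactness: subsequence of φ(-n) y converges
        obtain ⟨z, -, ψ, hψ, hz⟩ :=
          IsCompact.tendsto_subseq (x := fun n : ℕ => φ (-(n:ℝ)) y)
            isCompact_univ (fun n => Set.mem_univ _)
        have hψtop : Filter.Tendsto (fun n => ((ψ n : ℕ) : ℝ)) Filter.atTop Filter.atTop :=
          tendsto_natCast_atTop_atTop.comp hψ.tendsto_atTop
        -- J (φ t z) = c for all t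
        have hflat : ∀ t : ℝ, J (φ t z) = c := by
          intro t
          have h1 : Filter.Tendsto (fun n => J (φ t (φ (-(ψ n : ℝ)) y)))
              Filter.atTop (nhds (J (φ t z))) :=
            ((hJ.comp (φ.continuous_toFun t)).continuousAt.tendsto).comp hz
          have h2 : ∀ n, J (φ t (φ (-(ψ n : ℝ)) y)) = g ((ψ n : ℝ) - t) := by
            intro n
            rw [← Flow.map_add]
            simp [hg]
            ring_nf
          have h3 : Filter.Tendsto (fun n => g ((ψ n : ℝ) - t)) Filter.atTop (nhds c) :=
            hgc.comp (Filter.tendsto_atTop_add_const_right _ (-t) hψtop)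
          have : Filter.Tendsto (fun n => J (φ t (φ (-(ψ n : ℝ)) y)))
              Filter.atTop (nhds c) := by
            simpa only [h2] using h3
          exact tendsto_nhds_unique h1 this
        have hcmem : c ∈ Set.Icc a b := by
          constructor
          · rw [← hg0]; exact le_ciSup hbdd 0
          · exact ciSup_le hub
        have hzmem : J z ∈ Set.Icc a b := by
          rw [show J z = c by simpa [Flow.map_zero_apply] using hflat 0]
          exact hcmem
        have := hsa z hzmem (show (0:ℝ) < 1 by norm_num)
        simp only [hflat 0, hflat 1] at this
        exact lt_irrefl c this
    -- level sets
    have hbmem : ∀ x : X, J x = b → J x ∈ Set.Icc a b := fun x hx => by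
      rw [hx]; exact ⟨hab.le, le_refl _⟩
    have hamem : ∀ x : X, J x = a → J x ∈ Set.Icc a b := fun x hx => by
      rw [hx]; exact ⟨le_refl _, hab.le⟩
    -- hitting time τ for level b
    have hτ : ∀ x : {x : X // J x = b}, ∃ t : ℝ, 0 ≤ t ∧ J (φ t (x:X)) = a := by
      rintro ⟨x, hx⟩
      obtain ⟨t, ht, hta⟩ := hreach x hx
      exact ⟨t, ht, hta⟩
    set τ : {x : X // J x = b} → ℝ := fun x => (hτ x).choose with hτdef
    have hτ0 : ∀ x, 0 ≤ τ x := fun x => (hτ x).choose_spec.1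
    have hτa : ∀ x, J (φ (τ x) (x:X)) = a := fun x => (hτ x).choose_spec.2
    have hτuniq : ∀ (x : {x : X // J x = b}) (t : ℝ), J (φ t (x:X)) = a → t = τ x := by
      intro x t ht
      have := (hsa (x:X) (hbmem _ x.2)).injective (a₁ := t) (a₂ := τ x)
      exact this (by rw [ht, hτa])
    -- hitting time σ for level a (backwards)
    have hσ : ∀ y : {y : X // J y = a}, ∃ s : ℝ, s ≤ 0 ∧ J (φ s (y:X)) = b := by
      rintro ⟨y, hy⟩
      obtain ⟨s, hs, hsb⟩ := hback y hy
      exact ⟨s, hs, hsb⟩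
    set σ : {y : X // J y = a} → ℝ := fun y => (hσ y).choose with hσdef
    have hσb : ∀ y, J (φ (σ y) (y:X)) = b := fun y => (hσ y).choose_spec.2
    -- the maps
    set F : {x : X // J x = b} → {x : X // J x = a} :=
      fun x => ⟨φ (τ x) (x:X), hτa x⟩ with hF
    set G : {y : X // J y = a} → {y : X // J y = b} :=
      fun y => ⟨φ (σ y) (y:X), hσb y⟩ with hG
    have hGF : Function.LeftInverse G F := by
      intro x
      have key : σ (F x) + τ x = 0 := by
        have h1 : J (φ (σ (F x) + τ x) (x:X)) = b := by
          rw [Flow.map_add]; exact hσb (F x)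
        have h2 : J (φ (0:ℝ) (x:X)) = b := by rw [Flow.map_zero_apply]; exact x.2
        exact (hsa (x:X) (hbmem _ x.2)).injective (h1.trans h2.symm)
      apply Subtype.ext
      show φ (σ (F x)) (φ (τ x) (x:X)) = (x:X)
      rw [← Flow.map_add, key, Flow.map_zero_apply]
    have hFG : Function.RightInverse G F := by
      intro y
      have key : τ (G y) + σ y = 0 := by
        have h1 : J (φ (τ (G y) + σ y) (y:X)) = a := by
          rw [Flow.map_add]; exact hτa (G y)
        have h2 : J (φ (0:ℝ) (y:X)) = a := by rw [Flow.map_zero_apply]; exact y.2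
        exact (hsa (y:X) (hamem _ y.2)).injective (h1.trans h2.symm)
      apply Subtype.ext
      show φ (τ (G y)) (φ (σ y) (y:X)) = (y:X)
      rw [← Flow.map_add, key, Flow.map_zero_apply]
    -- continuity of τ
    have hτcont : Continuous τ := by
      rw [continuous_iff_continuousAt]
      intro x₀
      rw [ContinuousAt, Metric.tendsto_nhds]
      intro ε hε
      have hanti : StrictAnti fun t => J (φ t (x₀:X)) := hsa _ (hbmem _ x₀.2)
      have hlt1 : a < J (φ (τ x₀ - ε) (x₀:X)) := by
        rw [← hτa x₀]; exact hanti (by linarith)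
      have hlt2 : J (φ (τ x₀ + ε) (x₀:X)) < a := by
        rw [← hτa x₀]; exact hanti (by linarith)
      set V : Set X := {x | a < J (φ (τ x₀ - ε) x) ∧ J (φ (τ x₀ + ε) x) < a} with hV
      have hVopen : IsOpen V := by
        apply IsOpen.inter
        · exact isOpen_lt continuous_const (hJ.comp (φ.continuous_toFun _))
        · exact isOpen_lt (hJ.comp (φ.continuous_toFun _)) continuous_const
      have hx₀V : (x₀ : X) ∈ V := ⟨hlt1, hlt2⟩
      have hmem : ∀ᶠ x : {x : X // J x = b} in nhds x₀, (x:X) ∈ V :=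
        continuous_subtype_val.continuousAt.eventually_mem (hVopen.mem_nhds hx₀V)
      filter_upwards [hmem] with x hx
      have hax : StrictAnti fun t => J (φ t (x:X)) := hsa _ (hbmem _ x.2)
      have h1 : τ x₀ - ε < τ x := by
        by_contra h
        push_neg at h
        have := hax.antitone h
        rw [hτa x] at this
        exact absurd (lt_of_lt_of_le hx.1 this) (lt_irrefl a)
      have h2 : τ x < τ x₀ + ε := by
        by_contra h
        push_neg at h
        have := hax.antitone h
        rw [hτa x] at this
        exact absurd (lt_of_le_of_lt this hx.2) (lt_irrefl a)
      rw [Real.dist_eq, abs_lt]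
      constructor <;> linarith
    have hFcont : Continuous F := by
      apply Continuous.subtype_mk
      exact φ.continuous hτcont continuous_subtype_val
    have : CompactSpace {x : X // J x = b} :=
      isCompact_iff_compactSpace.mp (isClosed_eq hJ continuous_const).isCompact
    set e : {x : X // J x = b} ≃ {x : X // J x = a} :=
      ⟨F, G, hGF, hFG⟩ with he
    refine ⟨Continuous.homeoOfEquivCompactToT2 (f := e) hFcont, ?_⟩
    intro x
    exact ⟨τ x, hτ0 x, rfl⟩
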